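/- Let P be a k-profile such that P contains an increasing chain of separations whose supremum is not in P. Then the set {S : λ(S) < ∞ and there exists α with (S ∩ Q) ∪ Q_α ∈ P} (where Q is the supremum of the chain (Q_α)) is a profile of the separations of finite order that induces P; in particular, for any two k-profiles P_1 ≠ P_2 with the same truncation P_0 to a (k−1)-profile, P_0 is limit-closed (contains the supremum of every chain of its elements). -/

import Mathlib

open Set

/-- A symmetric set function: `λ(A) = λ(E \ A)`. -/
def SymmFn {E : Type*} (lam : Set E → ℕ∞) : Prop := ∀ A : Set E, lam Aᶜ = lam A

/-- A submodular set function: `λ(A) + λ(B) ≥ λ(A ∪ B) + λ(A ∩ B)`. -/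
def SubmodularFn {E : Type*} (lam : Set E → ℕ∞) : Prop :=
  ∀ A B : Set E, lam (A ∪ B) + lam (A ∩ B) ≤ lam A + lam B

/-- A limit-closed set function: the union of a (nonempty) chain of sets of connectivity at most
`k` again has connectivity at most `k`. -/
def LimitClosedFn {E : Type*} (lam : Set E → ℕ∞) : Prop :=
  ∀ (k : ℕ) (C : Set (Set E)), C.Nonempty → IsChain (· ⊆ ·) C →
    (∀ A ∈ C, lam A ≤ (k : ℕ∞)) → lam (⋃₀ C) ≤ (k : ℕ∞)

/-- A profile for the connectivity system `(E, lam)` of the sets satisfying the eligibility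
predicate `ord`: a consistent (downward-closed) orientation of the eligible sets satisfying the
profile property. -/
def IsProfileOn {E : Type*} (ord : Set E → Prop) (P : Set (Set E)) : Prop :=
  (∀ A ∈ P, ord A) ∧
  (∀ A : Set E, ord A → (A ∈ P ↔ Aᶜ ∉ P)) ∧
  (∀ A B : Set E, ord A → A ⊆ B → B ∈ P → A ∈ P) ∧
  (∀ A ∈ P, ∀ B ∈ P, (A ∪ B)ᶜ ∉ P)

set_option linter.unusedSectionVars false
set_option linter.unusedVariables false

namespace Stmt13Aux

private lemma enat_le_pred {x : ℕ∞} {j : ℕ} (h : x < (j:ℕ∞)) : x ≤ ((j-1:ℕ):ℕ∞) := by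
  lift x to ℕ using ne_top_of_lt h
  have : x < j := by exact_mod_cast h
  exact_mod_cast Nat.le_pred_of_lt this

private lemma enat_cancel_le {a b c d : ℕ∞} (hca : c ≤ a) (hc : c ≠ ⊤) (hd : d ≠ ⊤)
    (h : a + b ≤ c + d) : b ≤ d := by
  have hcd : c + d ≠ ⊤ := WithTop.add_ne_top.mpr ⟨hc, hd⟩
  have ha : a ≠ ⊤ := ne_top_of_le_ne_top hcd (le_trans le_self_add h)
  have hb : b ≠ ⊤ := ne_top_of_le_ne_top hcd (le_trans le_add_self h)
  lift a to ℕ using ha; lift b to ℕ using hb; lift c to ℕ using hc; lift d to ℕ using hd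
  have h' : a + b ≤ c + d := by exact_mod_cast h
  have hca' : c ≤ a := by exact_mod_cast hca
  exact_mod_cast (by omega : b ≤ d)

private lemma enat_lt_of_add {k : ℕ} {a b d : ℕ∞} (h : (k:ℕ∞) + b ≤ a + d)
    (hd : d < (k:ℕ∞)) (ha : a ≠ ⊤) : b < a := by
  have hd' : d ≠ ⊤ := ne_top_of_lt hd
  have had : a + d ≠ ⊤ := WithTop.add_ne_top.mpr ⟨ha, hd'⟩
  have hb : b ≠ ⊤ := ne_top_of_le_ne_top had (le_trans le_add_self h)
  lift a to ℕ using ha; lift b to ℕ using hb; lift d to ℕ using hd'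
  have h' : k + b ≤ a + d := by exact_mod_cast h
  have hd'' : d < k := by exact_mod_cast hd
  exact_mod_cast (by omega : b < a)

private lemma exists_min {ι : Type*} (f : ι → ℕ∞) (s : Set ι) (hs : s.Nonempty) :
    ∃ β ∈ s, ∀ γ ∈ s, f β ≤ f γ := by
  obtain ⟨m, hm, hmin⟩ := WellFounded.has_min wellFounded_lt (f '' s) (hs.image f)
  obtain ⟨β, hβ, rfl⟩ := hm
  exact ⟨β, hβ, fun γ hγ => not_lt.mp fun h => hmin _ (Set.mem_image_of_mem f hγ) h⟩

private lemma chain_image {ι E : Type*} [LinearOrder ι] (f : ι → Set E) (hf : Monotone f)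
    (s : Set ι) : IsChain (· ⊆ ·) (f '' s) := by
  rintro _ ⟨a, _, rfl⟩ _ ⟨b, _, rfl⟩ _
  rcases le_total a b with h | h
  · exact Or.inl (hf h)
  · exact Or.inr (hf h)

section Core

variable {E ι : Type*} [LinearOrder ι] [Nonempty ι]
  {lam : Set E → ℕ∞} {k : ℕ} {P : Set (Set E)} {Q : ι → Set E}

private lemma lam_QU_lt (hlim : LimitClosedFn lam) (hk : 1 ≤ k)
    (hP : IsProfileOn (fun A => lam A < (k:ℕ∞)) P) (hmono : Monotone Q) (hmem : ∀ α, Q α ∈ P) :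
    lam (⋃ γ, Q γ) < (k:ℕ∞) := by
  have hch : IsChain (· ⊆ ·) (Set.range Q) := by
    rintro _ ⟨a, rfl⟩ _ ⟨b, rfl⟩ _
    rcases le_total a b with h | h
    · exact Or.inl (hmono h)
    · exact Or.inr (hmono h)
  have hb : ∀ A ∈ Set.range Q, lam A ≤ ((k-1:ℕ):ℕ∞) := by
    rintro _ ⟨γ, rfl⟩
    exact enat_le_pred (hP.1 _ (hmem γ))
  have := hlim (k-1) (Set.range Q) (Set.range_nonempty Q) hch hb
  rw [Set.sUnion_range] at this
  exact lt_of_le_of_lt this (by exact_mod_cast Nat.sub_lt hk Nat.one_pos)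

private lemma QUc_mem (hlim : LimitClosedFn lam) (hk : 1 ≤ k)
    (hP : IsProfileOn (fun A => lam A < (k:ℕ∞)) P) (hmono : Monotone Q) (hmem : ∀ α, Q α ∈ P)
    (hsup : (⋃ γ, Q γ) ∉ P) : (⋃ γ, Q γ)ᶜ ∈ P := by
  by_contra h
  exact hsup ((hP.2.1 _ (lam_QU_lt hlim hk hP hmono hmem)).mpr h)

private lemma union_wit {D C : Set E} (h : Dᶜ ⊆ C) (β γ : ι) :
    ((D ∩ ⋃ δ, Q δ) ∪ Q β) ∪ ((C ∩ ⋃ δ, Q δ) ∪ Q γ) = ⋃ δ, Q δ := by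
  apply subset_antisymm
  · exact union_subset (union_subset inter_subset_right (subset_iUnion Q β))
      (union_subset inter_subset_right (subset_iUnion Q γ))
  · intro x hx
    by_cases hD : x ∈ D
    · exact Or.inl (Or.inl ⟨hD, hx⟩)
    · exact Or.inr (Or.inl ⟨h hD, hx⟩)

private lemma notboth (hlim : LimitClosedFn lam) (hk : 1 ≤ k)
    (hP : IsProfileOn (fun A => lam A < (k:ℕ∞)) P) (hmono : Monotone Q) (hmem : ∀ α, Q α ∈ P)
    (hsup : (⋃ γ, Q γ) ∉ P) {D C : Set E} (h : Dᶜ ⊆ C) {β γ : ι}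
    (w1 : (D ∩ ⋃ δ, Q δ) ∪ Q β ∈ P) (w2 : (C ∩ ⋃ δ, Q δ) ∪ Q γ ∈ P) : False := by
  have hpr := hP.2.2.2 _ w1 _ w2
  rw [union_wit h β γ] at hpr
  exact hpr (QUc_mem hlim hk hP hmono hmem hsup)

private lemma mem_compl_of_not_mem (hP : IsProfileOn (fun A => lam A < (k:ℕ∞)) P)
    {A : Set E} (hA : lam A < (k:ℕ∞)) (h : A ∉ P) : Aᶜ ∈ P := by
  by_contra hc
  exact h ((hP.2.1 A hA).mpr hc)

private lemma inter_ne_top (hsub : SubmodularFn lam) {S T : Set E}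
    (hS : lam S ≠ ⊤) (hT : lam T ≠ ⊤) : lam (S ∩ T) ≠ ⊤ :=
  ne_top_of_le_ne_top (WithTop.add_ne_top.mpr ⟨hS, hT⟩) (le_trans le_add_self (hsub S T))

private lemma core_argmin (hsub : SubmodularFn lam) (hlim : LimitClosedFn lam)
    (hP : IsProfileOn (fun A => lam A < (k:ℕ∞)) P) (hmono : Monotone Q) (hmem : ∀ α, Q α ∈ P)
    {X : Set E} (hXQ : X ⊆ ⋃ γ, Q γ) (hX : lam X ≠ ⊤) (c : ι) :
    ∃ β, c ≤ β ∧ (∀ γ, c ≤ γ → lam (X ∪ Q β) ≤ lam (X ∪ Q γ)) ∧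
      ∀ j : ℕ, (∀ γ, lam (Q γ) < (j:ℕ∞)) → lam (X ∪ Q β) < (j:ℕ∞) := by
  obtain ⟨β, hcβ, hmin⟩ := exists_min (fun γ => lam (X ∪ Q γ)) {γ | c ≤ γ} ⟨c, le_rfl⟩
  refine ⟨β, hcβ, fun γ hγ => hmin γ hγ, ?_⟩
  have hordc : lam (Q c) ≠ ⊤ := ne_top_of_lt (hP.1 _ (hmem c))
  have hmtop : lam (X ∪ Q β) ≠ ⊤ := by
    have h1 : lam (X ∪ Q c) ≤ lam X + lam (Q c) := le_trans le_self_add (hsub X (Q c))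
    exact ne_top_of_le_ne_top (WithTop.add_ne_top.mpr ⟨hX, hordc⟩) (le_trans (hmin c le_rfl) h1)
  intro j hj
  rcases Nat.eq_zero_or_pos j with hj0 | hj1
  · subst hj0
    exact absurd (hj β) (by simp)
  have hcorner : ∀ γ, β ≤ γ → lam ((X ∩ Q γ) ∪ Q β) ≤ ((j-1:ℕ):ℕ∞) := by
    intro γ hγ
    have hub : X ∪ Q β ∪ Q γ = X ∪ Q γ := by
      rw [union_assoc, union_eq_self_of_subset_left (hmono hγ)]
    have hib : (X ∪ Q β) ∩ Q γ = (X ∩ Q γ) ∪ Q β := by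
      ext x
      have h1 : x ∈ Q β → x ∈ Q γ := fun h => hmono hγ h
      simp only [mem_inter_iff, mem_union]
      tauto
    have hs := hsub (X ∪ Q β) (Q γ)
    rw [hub, hib] at hs
    have hle := enat_cancel_le (hmin γ (le_trans hcβ hγ)) hmtop
      (ne_top_of_lt (hP.1 _ (hmem γ))) hs
    exact le_trans hle (enat_le_pred (hj γ))
  have hfm : Monotone (fun γ => (X ∩ Q γ) ∪ Q β) :=
    fun a b hab => union_subset_union_left _ (inter_subset_inter_right _ (hmono hab))
  have hchain := chain_image _ hfm {γ | β ≤ γ}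
  have hne : ((fun γ => (X ∩ Q γ) ∪ Q β) '' {γ | β ≤ γ}).Nonempty :=
    ⟨_, ⟨β, le_rfl, rfl⟩⟩
  have hbd : ∀ A ∈ (fun γ => (X ∩ Q γ) ∪ Q β) '' {γ | β ≤ γ}, lam A ≤ ((j-1:ℕ):ℕ∞) := by
    rintro _ ⟨γ, hγ, rfl⟩
    exact hcorner γ hγ
  have hun : ⋃₀ ((fun γ => (X ∩ Q γ) ∪ Q β) '' {γ | β ≤ γ}) = X ∪ Q β := by
    rw [Set.sUnion_image]
    apply subset_antisymm
    · exact iUnion₂_subset fun γ _ =>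
        union_subset_union_left _ inter_subset_left
    · intro x hx
      rcases hx with hX' | hQ
      · obtain ⟨γ₀, hγ₀⟩ := mem_iUnion.mp (hXQ hX')
        exact mem_iUnion₂.mpr ⟨max β γ₀, le_max_left _ _,
          Or.inl ⟨hX', hmono (le_max_right _ _) hγ₀⟩⟩
      · exact mem_iUnion₂.mpr ⟨β, le_rfl, Or.inr hQ⟩
  have hfin := hlim (j-1) _ hne hchain hbd
  rw [hun] at hfin
  exact lt_of_le_of_lt hfin (by exact_mod_cast Nat.sub_lt hj1 Nat.one_pos)

private lemma core_complete (hsym : SymmFn lam) (hsub : SubmodularFn lam)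
    (hlim : LimitClosedFn lam) (hk : 1 ≤ k)
    (hP : IsProfileOn (fun A => lam A < (k:ℕ∞)) P) (hmono : Monotone Q) (hmem : ∀ α, Q α ∈ P)
    {S : Set E} (hS : lam S ≠ ⊤) :
    (∃ α, (S ∩ ⋃ γ, Q γ) ∪ Q α ∈ P) ∨ ∃ β, (Sᶜ ∩ ⋃ γ, Q γ) ∪ Q β ∈ P := by
  by_contra hcon
  push_neg at hcon
  obtain ⟨h1, h2⟩ := hcon
  have hQlt : lam (⋃ γ, Q γ) < (k:ℕ∞) := lam_QU_lt hlim hk hP hmono hmem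
  have hQtop : lam (⋃ γ, Q γ) ≠ ⊤ := ne_top_of_lt hQlt
  have hX : lam (S ∩ ⋃ γ, Q γ) ≠ ⊤ := inter_ne_top hsub hS hQtop
  have hYt : lam (Sᶜ ∩ ⋃ γ, Q γ) ≠ ⊤ := inter_ne_top hsub (by rw [hsym]; exact hS) hQtop
  have hjk : ∀ γ, lam (Q γ) < (k:ℕ∞) := fun γ => hP.1 _ (hmem γ)
  obtain ⟨β, hcβ, hminX, hjX⟩ := core_argmin hsub hlim hP hmono hmem
    (inter_subset_right (s := S)) hX (Classical.arbitrary ι)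
  have hmk : lam ((S ∩ ⋃ γ, Q γ) ∪ Q β) < (k:ℕ∞) := hjX k hjk
  have hM : ((S ∩ ⋃ γ, Q γ) ∪ Q β)ᶜ ∈ P := mem_compl_of_not_mem hP hmk (h1 β)
  obtain ⟨δ, hβδ, hminY, hjY⟩ := core_argmin hsub hlim hP hmono hmem
    (inter_subset_right (s := Sᶜ)) hYt β
  have hH : ((Sᶜ ∩ ⋃ γ, Q γ) ∪ Q δ)ᶜ ∈ P := mem_compl_of_not_mem hP (hjY k hjk) (h2 δ)
  have hprof := hP.2.2.2 _ hM _ hH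
  have hCid : (((S ∩ ⋃ γ, Q γ) ∪ Q β)ᶜ ∪ ((Sᶜ ∩ ⋃ γ, Q γ) ∪ Q δ)ᶜ)ᶜ
      = ((S ∩ ⋃ γ, Q γ) ∩ Q δ) ∪ Q β := by
    rw [compl_union, compl_compl, compl_compl]
    ext x
    have h1' : x ∈ Q β → x ∈ Q δ := fun h => hmono hβδ h
    simp only [mem_inter_iff, mem_union, mem_compl_iff]
    tauto
  rw [hCid] at hprof
  have hub : (S ∩ ⋃ γ, Q γ) ∪ Q β ∪ Q δ = (S ∩ ⋃ γ, Q γ) ∪ Q δ := by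
    rw [union_assoc, union_eq_self_of_subset_left (hmono hβδ)]
  have hib : ((S ∩ ⋃ γ, Q γ) ∪ Q β) ∩ Q δ = ((S ∩ ⋃ γ, Q γ) ∩ Q δ) ∪ Q β := by
    ext x
    have h1' : x ∈ Q β → x ∈ Q δ := fun h => hmono hβδ h
    simp only [mem_inter_iff, mem_union]
    tauto
  have hsb := hsub ((S ∩ ⋃ γ, Q γ) ∪ Q β) (Q δ)
  rw [hub, hib] at hsb
  have hmtop : lam ((S ∩ ⋃ γ, Q γ) ∪ Q β) ≠ ⊤ := ne_top_of_lt hmk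
  have hCord : lam (((S ∩ ⋃ γ, Q γ) ∩ Q δ) ∪ Q β) ≤ lam (Q δ) :=
    enat_cancel_le (hminX δ (le_trans hcβ hβδ)) hmtop (ne_top_of_lt (hjk δ)) hsb
  have hCP : ((S ∩ ⋃ γ, Q γ) ∩ Q δ) ∪ Q β ∈ P :=
    hP.2.2.1 _ (Q δ) (lt_of_le_of_lt hCord (hjk δ))
      (union_subset inter_subset_right (hmono hβδ)) (hmem δ)
  exact hprof hCP

private lemma core_witness_of_mem (hsub : SubmodularFn lam)
    (hlim : LimitClosedFn lam) (hk : 1 ≤ k)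
    (hP : IsProfileOn (fun A => lam A < (k:ℕ∞)) P) (hmono : Monotone Q) (hmem : ∀ α, Q α ∈ P)
    {S : Set E} (hSP : S ∈ P) (j : ℕ) (hj : ∀ γ, lam (Q γ) < (j:ℕ∞)) :
    ∃ β, (S ∩ ⋃ γ, Q γ) ∪ Q β ∈ P ∧ lam ((S ∩ ⋃ γ, Q γ) ∪ Q β) < (j:ℕ∞) := by
  have hjk : ∀ γ, lam (Q γ) < (k:ℕ∞) := fun γ => hP.1 _ (hmem γ)
  have hSk : lam S < (k:ℕ∞) := hP.1 _ hSP
  have hQlt : lam (⋃ γ, Q γ) < (k:ℕ∞) := lam_QU_lt hlim hk hP hmono hmem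
  have hX : lam (S ∩ ⋃ γ, Q γ) ≠ ⊤ := inter_ne_top hsub (ne_top_of_lt hSk) (ne_top_of_lt hQlt)
  by_cases hcase : ∀ c, ∃ γ, c ≤ γ ∧ (k:ℕ∞) ≤ lam (S ∪ Q γ)
  · -- cofinally large unions
    have hIbd : ∀ A ∈ (fun γ => S ∩ Q γ) '' {γ | (k:ℕ∞) ≤ lam (S ∪ Q γ)},
        lam A ≤ ((k-1:ℕ):ℕ∞) := by
      rintro _ ⟨γ, hγ, rfl⟩
      have h2 : (k:ℕ∞) + lam (S ∩ Q γ) ≤ lam S + lam (Q γ) :=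
        le_trans (add_le_add hγ le_rfl) (hsub S (Q γ))
      exact enat_le_pred (lt_trans (enat_lt_of_add h2 (hjk γ) (ne_top_of_lt hSk)) hSk)
    obtain ⟨γ₁, hγ₁⟩ := hcase (Classical.arbitrary ι)
    have hne : ((fun γ => S ∩ Q γ) '' {γ | (k:ℕ∞) ≤ lam (S ∪ Q γ)}).Nonempty :=
      ⟨_, ⟨γ₁, hγ₁.2, rfl⟩⟩
    have hchain := chain_image (fun γ => S ∩ Q γ)
      (fun a b hab => inter_subset_inter_right _ (hmono hab)) {γ | (k:ℕ∞) ≤ lam (S ∪ Q γ)}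
    have hun : ⋃₀ ((fun γ => S ∩ Q γ) '' {γ | (k:ℕ∞) ≤ lam (S ∪ Q γ)}) = S ∩ ⋃ γ, Q γ := by
      rw [Set.sUnion_image]
      apply subset_antisymm
      · exact iUnion₂_subset fun γ _ => inter_subset_inter_right _ (subset_iUnion Q γ)
      · rintro x ⟨hxS, hxQ⟩
        obtain ⟨γ₀, hγ₀⟩ := mem_iUnion.mp hxQ
        obtain ⟨γ, hγle, hγI⟩ := hcase γ₀
        exact mem_iUnion₂.mpr ⟨γ, hγI, hxS, hmono hγle hγ₀⟩
    have hXineq := hlim (k-1) _ hne hchain hIbd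
    rw [hun] at hXineq
    have hXk : lam (S ∩ ⋃ γ, Q γ) < (k:ℕ∞) :=
      lt_of_le_of_lt hXineq (by exact_mod_cast Nat.sub_lt hk Nat.one_pos)
    have hXP : S ∩ ⋃ γ, Q γ ∈ P := hP.2.2.1 _ S hXk inter_subset_left hSP
    obtain ⟨β, hcβ, hmin, hjX⟩ := core_argmin hsub hlim hP hmono hmem
      (inter_subset_right (s := S)) hX (Classical.arbitrary ι)
    have hnc := hP.2.2.2 _ hXP _ (hmem β)
    have hord : lam ((S ∩ ⋃ γ, Q γ) ∪ Q β) < (k:ℕ∞) := hjX k hjk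
    refine ⟨β, ?_, hjX j hj⟩
    by_contra hnm
    exact hnc (mem_compl_of_not_mem hP hord hnm)
  · push_neg at hcase
    obtain ⟨c₀, hc₀⟩ := hcase
    obtain ⟨β, hcβ, hmin, hjX⟩ := core_argmin hsub hlim hP hmono hmem
      (inter_subset_right (s := S)) hX c₀
    have hSQ : S ∪ Q β ∈ P := by
      have hnc := hP.2.2.2 _ hSP _ (hmem β)
      by_contra hnm
      exact hnc (mem_compl_of_not_mem hP (hc₀ β hcβ) hnm)
    have hord : lam ((S ∩ ⋃ γ, Q γ) ∪ Q β) < (k:ℕ∞) := hjX k hjk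
    exact ⟨β, hP.2.2.1 _ (S ∪ Q β) hord
      (union_subset_union_left _ inter_subset_left) hSQ, hjX j hj⟩

private lemma core_mem_of_witness (hsym : SymmFn lam) (hsub : SubmodularFn lam)
    (hlim : LimitClosedFn lam) (hk : 1 ≤ k)
    (hP : IsProfileOn (fun A => lam A < (k:ℕ∞)) P) (hmono : Monotone Q) (hmem : ∀ α, Q α ∈ P)
    (hsup : (⋃ γ, Q γ) ∉ P) {S : Set E}
    (hSk : lam S < (k:ℕ∞)) (hw : ∃ α, (S ∩ ⋃ γ, Q γ) ∪ Q α ∈ P) : S ∈ P := by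
  by_contra h
  have hSc : Sᶜ ∈ P := mem_compl_of_not_mem hP hSk h
  have hjk : ∀ γ, lam (Q γ) < (k:ℕ∞) := fun γ => hP.1 _ (hmem γ)
  obtain ⟨β, hβ, _⟩ := core_witness_of_mem hsub hlim hk hP hmono hmem hSc k hjk
  obtain ⟨α, hα⟩ := hw
  exact notboth hlim hk hP hmono hmem hsup (Subset.rfl (s := Sᶜ)) hα hβ

private lemma core_cofinal (hsub : SubmodularFn lam) (hlim : LimitClosedFn lam) (hk : 1 ≤ k)
    (hP : IsProfileOn (fun A => lam A < (k:ℕ∞)) P) (hmono : Monotone Q) (hmem : ∀ α, Q α ∈ P)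
    {S : Set E} (hS : lam S ≠ ⊤) {α : ι} (hw : (S ∩ ⋃ γ, Q γ) ∪ Q α ∈ P) (c : ι) :
    ∃ β, c ≤ β ∧ (S ∩ ⋃ γ, Q γ) ∪ Q β ∈ P := by
  by_contra h
  push_neg at h
  have hjk : ∀ γ, lam (Q γ) < (k:ℕ∞) := fun γ => hP.1 _ (hmem γ)
  have hX : lam (S ∩ ⋃ γ, Q γ) ≠ ⊤ :=
    inter_ne_top hsub hS (ne_top_of_lt (lam_QU_lt hlim hk hP hmono hmem))
  obtain ⟨β, hcβ, hmin, hjX⟩ := core_argmin hsub hlim hP hmono hmem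
    (inter_subset_right (s := S)) hX (max α c)
  have hβα : α ≤ β := le_trans (le_max_left α c) hcβ
  have hβc : c ≤ β := le_trans (le_max_right α c) hcβ
  have hU : (S ∩ ⋃ γ, Q γ) ∪ Q α ∪ Q β = (S ∩ ⋃ γ, Q γ) ∪ Q β := by
    rw [union_assoc, union_eq_self_of_subset_left (hmono hβα)]
  have hnc := hP.2.2.2 _ hw _ (hmem β)
  rw [hU] at hnc
  exact hnc (mem_compl_of_not_mem hP (hjX k hjk) (h β hβc))

private lemma core_union_witness (hsub : SubmodularFn lam)
    (hlim : LimitClosedFn lam) (hk : 1 ≤ k)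
    (hP : IsProfileOn (fun A => lam A < (k:ℕ∞)) P) (hmono : Monotone Q) (hmem : ∀ α, Q α ∈ P)
    {S T : Set E} (hT : lam T ≠ ⊤)
    (hwS : ∃ α, (S ∩ ⋃ γ, Q γ) ∪ Q α ∈ P) (hwT : ∃ α, (T ∩ ⋃ γ, Q γ) ∪ Q α ∈ P) :
    ∃ β, ((S ∪ T) ∩ ⋃ γ, Q γ) ∪ Q β ∈ P := by
  obtain ⟨α₀, hA⟩ := hwS
  by_contra hno
  push_neg at hno
  obtain ⟨α₁, hw1⟩ := hwT
  have hWcf : ∀ c, ∃ β, (α₀ ≤ β ∧ (T ∩ ⋃ γ, Q γ) ∪ Q β ∈ P) ∧ c ≤ β := by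
    intro c
    obtain ⟨β, hβ, hm⟩ := core_cofinal hsub hlim hk hP hmono hmem hT hw1 (max α₀ c)
    exact ⟨β, ⟨le_trans (le_max_left _ _) hβ, hm⟩, le_trans (le_max_right _ _) hβ⟩
  have hAk : lam ((S ∩ ⋃ γ, Q γ) ∪ Q α₀) < (k:ℕ∞) := hP.1 _ hA
  have hAtop : lam ((S ∩ ⋃ γ, Q γ) ∪ Q α₀) ≠ ⊤ := ne_top_of_lt hAk
  set a : ℕ := (lam ((S ∩ ⋃ γ, Q γ) ∪ Q α₀)).toNat with hadef
  have haA : (a:ℕ∞) = lam ((S ∩ ⋃ γ, Q γ) ∪ Q α₀) := ENat.coe_toNat hAtop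
  set W : Set ι := {β | α₀ ≤ β ∧ (T ∩ ⋃ γ, Q γ) ∪ Q β ∈ P} with hWdef
  have hstrict : ∀ β ∈ W,
      lam (((S ∩ ⋃ γ, Q γ) ∪ Q α₀) ∩ ((T ∩ ⋃ γ, Q γ) ∪ Q β))
        < lam ((S ∩ ⋃ γ, Q γ) ∪ Q α₀) := by
    rintro β ⟨hαβ, hBP⟩
    have hBk : lam ((T ∩ ⋃ γ, Q γ) ∪ Q β) < (k:ℕ∞) := hP.1 _ hBP
    have hUid : ((S ∩ ⋃ γ, Q γ) ∪ Q α₀) ∪ ((T ∩ ⋃ γ, Q γ) ∪ Q β)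
        = ((S ∪ T) ∩ ⋃ γ, Q γ) ∪ Q β := by
      ext x
      have h1 : x ∈ Q α₀ → x ∈ Q β := fun h => hmono hαβ h
      simp only [mem_union, mem_inter_iff]
      tauto
    have hkle : (k:ℕ∞) ≤ lam (((S ∩ ⋃ γ, Q γ) ∪ Q α₀) ∪ ((T ∩ ⋃ γ, Q γ) ∪ Q β)) := by
      rw [hUid]
      by_contra hlt
      push_neg at hlt
      have hnc := hP.2.2.2 _ hA _ hBP
      rw [hUid] at hnc
      exact hnc (mem_compl_of_not_mem hP hlt (hno β))
    have h2 := le_trans (add_le_add hkle le_rfl)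
      (hsub ((S ∩ ⋃ γ, Q γ) ∪ Q α₀) ((T ∩ ⋃ γ, Q γ) ∪ Q β))
    exact enat_lt_of_add h2 hBk hAtop
  have hbd : ∀ B ∈ (fun β => ((S ∩ ⋃ γ, Q γ) ∪ Q α₀) ∩ ((T ∩ ⋃ γ, Q γ) ∪ Q β)) '' W,
      lam B ≤ ((a-1:ℕ):ℕ∞) := by
    rintro _ ⟨β, hβ, rfl⟩
    have := hstrict β hβ
    rw [← haA] at this
    exact enat_le_pred this
  have hchain := chain_image (fun β => ((S ∩ ⋃ γ, Q γ) ∪ Q α₀) ∩ ((T ∩ ⋃ γ, Q γ) ∪ Q β))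
    (fun x y hxy => inter_subset_inter_right _ (union_subset_union_right _ (hmono hxy))) W
  obtain ⟨β₀, hβ₀W, _⟩ := hWcf (Classical.arbitrary ι)
  have hne : ((fun β => ((S ∩ ⋃ γ, Q γ) ∪ Q α₀) ∩ ((T ∩ ⋃ γ, Q γ) ∪ Q β)) '' W).Nonempty :=
    ⟨_, ⟨β₀, hβ₀W, rfl⟩⟩
  have hun : ⋃₀ ((fun β => ((S ∩ ⋃ γ, Q γ) ∪ Q α₀) ∩ ((T ∩ ⋃ γ, Q γ) ∪ Q β)) '' W)
      = (S ∩ ⋃ γ, Q γ) ∪ Q α₀ := by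
    rw [Set.sUnion_image]
    apply subset_antisymm
    · exact iUnion₂_subset fun β _ => inter_subset_left
    · intro x hx
      have hxQU : x ∈ ⋃ γ, Q γ := by
        rcases hx with h | h
        · exact h.2
        · exact subset_iUnion Q α₀ h
      obtain ⟨γ₀, hγ₀⟩ := mem_iUnion.mp hxQU
      obtain ⟨β, hβW, hβge⟩ := hWcf γ₀
      exact mem_iUnion₂.mpr ⟨β, hβW, hx, Or.inr (hmono hβge hγ₀)⟩
  have hfin := hlim (a-1) _ hne hchain hbd
  rw [hun, ← haA] at hfin
  have hpos : 0 < lam ((S ∩ ⋃ γ, Q γ) ∪ Q α₀) :=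
    lt_of_le_of_lt zero_le (hstrict β₀ hβ₀W)
  rw [← haA] at hpos
  have h1a : 1 ≤ a := by exact_mod_cast hpos
  have : a ≤ a - 1 := by exact_mod_cast hfin
  omega

end Core

end Stmt13Aux

open Stmt13Aux in
/-- Given a `k`-profile `P` containing an increasing chain `(Q α)` whose union is not in `P`,
the family `{S | λ(S) < ∞ ∧ ∃ α, (S ∩ Q) ∪ Q α ∈ P}` is a profile of the sets of finite order
inducing `P`; in particular, the common truncation of two distinct `k`-profiles to a
`(k-1)`-profile is limit-closed. -/
theorem stmt13 {E : Type*} {ι : Type*} [LinearOrder ι] [WellFoundedLT ι] [Nonempty ι]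
    (lam : Set E → ℕ∞)
    (hsym : SymmFn lam) (hsub : SubmodularFn lam) (hlim : LimitClosedFn lam)
    (k : ℕ) (hk : 1 ≤ k)
    (P : Set (Set E)) (hP : IsProfileOn (fun A => lam A < (k : ℕ∞)) P)
    (Q : ι → Set E) (hmono : Monotone Q) (hmem : ∀ α, Q α ∈ P)
    (hsup : (⋃ α, Q α) ∉ P) :
    IsProfileOn (fun A => lam A < ⊤)
      {S : Set E | lam S < ⊤ ∧ ∃ α, (S ∩ ⋃ γ, Q γ) ∪ Q α ∈ P} ∧
    (∀ S : Set E, lam S < (k : ℕ∞) →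
      (S ∈ {S : Set E | lam S < ⊤ ∧ ∃ α, (S ∩ ⋃ γ, Q γ) ∪ Q α ∈ P} ↔ S ∈ P)) ∧
    (∀ P₁ P₂ : Set (Set E),
      IsProfileOn (fun A => lam A < (k : ℕ∞)) P₁ →
      IsProfileOn (fun A => lam A < (k : ℕ∞)) P₂ → P₁ ≠ P₂ →
      {S ∈ P₁ | lam S < ((k - 1 : ℕ) : ℕ∞)} = {S ∈ P₂ | lam S < ((k - 1 : ℕ) : ℕ∞)} →
      ∀ 𝒞 : Set (Set E), 𝒞.Nonempty → IsChain (· ⊆ ·) 𝒞 →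
        𝒞 ⊆ {S ∈ P₁ | lam S < ((k - 1 : ℕ) : ℕ∞)} →
        ⋃₀ 𝒞 ∈ {S ∈ P₁ | lam S < ((k - 1 : ℕ) : ℕ∞)}) := by

  classical
  have hjk : ∀ γ, lam (Q γ) < (k:ℕ∞) := fun γ => hP.1 _ (hmem γ)
  refine ⟨⟨fun A hA => hA.1, ?ax2, ?ax3, ?ax4⟩, ?part2, ?part3⟩
  case ax2 =>
    intro A hA
    constructor
    · rintro ⟨_, α, w1⟩ ⟨_, β, w2⟩
      exact notboth hlim hk hP hmono hmem hsup (Subset.rfl (s := Aᶜ)) w1 w2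
    · intro hAc
      rcases core_complete hsym hsub hlim hk hP hmono hmem (ne_top_of_lt hA) with h | h
      · exact ⟨hA, h⟩
      · exact absurd ⟨by rw [hsym]; exact hA, h⟩ hAc
  case ax3 =>
    intro A B hA hAB hBP
    rcases core_complete hsym hsub hlim hk hP hmono hmem (ne_top_of_lt hA) with h | h
    · exact ⟨hA, h⟩
    · obtain ⟨β, w2⟩ := h
      obtain ⟨_, α, w1⟩ := hBP
      exact absurd (notboth hlim hk hP hmono hmem hsup (compl_subset_compl.mpr hAB) w1 w2) id
  case ax4 =>
    rintro A hAP B hBP ⟨_, γ, w2⟩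
    obtain ⟨β, w1⟩ := core_union_witness hsub hlim hk hP hmono hmem
      (ne_top_of_lt hBP.1) hAP.2 hBP.2
    exact notboth hlim hk hP hmono hmem hsup (Subset.rfl (s := (A ∪ B)ᶜ)) w1 w2
  case part2 =>
    intro S hSk
    constructor
    · intro hS'
      exact core_mem_of_witness hsym hsub hlim hk hP hmono hmem hsup hSk hS'.2
    · intro hSP
      obtain ⟨β, hβ, _⟩ := core_witness_of_mem hsub hlim hk hP hmono hmem hSP k hjk
      exact ⟨lt_of_lt_of_le hSk le_top, β, hβ⟩
  case part3 =>
    intro P₁ P₂ h₁ h₂ hne htr 𝒞 hCne hCch hCsub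
    have hmemb : ∀ A ∈ 𝒞, A ∈ P₁ ∧ lam A < ((k-1:ℕ):ℕ∞) := fun A hA => hCsub hA
    rcases Nat.eq_zero_or_pos (k-1) with hk0 | hk1
    · obtain ⟨A, hA⟩ := hCne
      have h0 := (hmemb A hA).2
      rw [hk0] at h0
      simp at h0
    have hbd : ∀ A ∈ 𝒞, lam A ≤ ((k-1-1:ℕ):ℕ∞) := fun A hA => enat_le_pred (hmemb A hA).2
    have hRord : lam (⋃₀ 𝒞) < ((k-1:ℕ):ℕ∞) :=
      lt_of_le_of_lt (hlim (k-1-1) 𝒞 hCne hCch hbd)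
        (by exact_mod_cast Nat.sub_lt hk1 Nat.one_pos)
    refine ⟨?_, hRord⟩
    by_contra hR1
    have hC2 : ∀ A ∈ 𝒞, A ∈ P₂ := by
      intro A hA
      have hmem' : A ∈ {S ∈ P₁ | lam S < ((k-1:ℕ):ℕ∞)} := ⟨(hmemb A hA).1, (hmemb A hA).2⟩
      rw [htr] at hmem'
      exact hmem'.1
    have hR2 : ⋃₀ 𝒞 ∉ P₂ := by
      intro hR2
      have hmem' : ⋃₀ 𝒞 ∈ {S ∈ P₂ | lam S < ((k-1:ℕ):ℕ∞)} := ⟨hR2, hRord⟩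
      rw [← htr] at hmem'
      exact hR1 hmem'.1
    letI : LinearOrder {A : Set E // A ∈ 𝒞} :=
      { Subtype.partialOrder _ with
        le_total := fun a b => hCch.total a.2 b.2
        toDecidableLE := fun _ _ => Classical.propDecidable _ }
    haveI hnei : Nonempty {A : Set E // A ∈ 𝒞} := hCne.to_subtype
    set Q' : {A : Set E // A ∈ 𝒞} → Set E := fun a => a.1 with hQ'def
    have hmono' : Monotone Q' := fun a b h => h
    have hQU' : (⋃ γ, Q' γ) = ⋃₀ 𝒞 := (Set.sUnion_eq_iUnion).symm
    have hmem₁ : ∀ γ, Q' γ ∈ P₁ := fun γ => (hmemb _ γ.2).1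
    have hmem₂ : ∀ γ, Q' γ ∈ P₂ := fun γ => hC2 _ γ.2
    have hsup₁ : (⋃ γ, Q' γ) ∉ P₁ := by rw [hQU']; exact hR1
    have hsup₂ : (⋃ γ, Q' γ) ∉ P₂ := by rw [hQU']; exact hR2
    have hj' : ∀ γ, lam (Q' γ) < ((k-1:ℕ):ℕ∞) := fun γ => (hmemb _ γ.2).2
    have key : ∀ (Pa Pb : Set (Set E)),
        IsProfileOn (fun A => lam A < (k:ℕ∞)) Pa →
        IsProfileOn (fun A => lam A < (k:ℕ∞)) Pb →
        {S ∈ Pa | lam S < ((k-1:ℕ):ℕ∞)} = {S ∈ Pb | lam S < ((k-1:ℕ):ℕ∞)} →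
        (∀ γ, Q' γ ∈ Pa) → (∀ γ, Q' γ ∈ Pb) → ((⋃ γ, Q' γ) ∉ Pb) → Pa ⊆ Pb := by
      intro Pa Pb hPa hPb htr' hmema hmembb hsupb A hA
      obtain ⟨β, hw, hwlt⟩ := core_witness_of_mem hsub hlim hk hPa hmono' hmema hA (k-1) hj'
      have hwb : (A ∩ ⋃ γ, Q' γ) ∪ Q' β ∈ Pb := by
        have hmem' : (A ∩ ⋃ γ, Q' γ) ∪ Q' β ∈ {S ∈ Pa | lam S < ((k-1:ℕ):ℕ∞)} := ⟨hw, hwlt⟩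
        rw [htr'] at hmem'
        exact hmem'.1
      exact core_mem_of_witness hsym hsub hlim hk hPb hmono' hmembb hsupb (hPa.1 _ hA) ⟨β, hwb⟩
    exact hne (subset_antisymm (key P₁ P₂ h₁ h₂ htr hmem₁ hmem₂ hsup₂)
      (key P₂ P₁ h₂ h₁ htr.symm hmem₂ hmem₁ hsup₁))
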